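/- Under the standing assumptions, setting u := f(U_{C*}) and C** := C* ∪ {u}, the chain C** satisfies condition (i): for every S ⊆ C** with U_S ⊄ U_{C**}, one has f(U_S) ∈ C**; in particular C** ∈ 𝒞₀. -/
import Mathlib


/-- The set of strict upper bounds of a chain `C`. -/
def U {P : Type*} [PartialOrder P] (C : Set P) : Set P := {x | ∀ y ∈ C, y < x}

/-- `𝒞₀` : the set of all chains `C` of `P` satisfying condition (i-C):
for every `S ⊆ C` with `U S ⊈ U C`, one has `f (U S) ∈ C`. -/
def Cfam0 {P : Type*} [PartialOrder P] (f : Set P → P) : Set (Set P) :=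
  {C | IsChain (· ≤ ·) C ∧ ∀ S ⊆ C, ¬ U S ⊆ U C → f (U S) ∈ C}

/-- `𝒞` : the set of all `C ∈ 𝒞₀` satisfying condition (ii-C):
for every `C' ∈ 𝒞₀`, one has `C \ C' ⊆ U C'`. -/
def Cfam {P : Type*} [PartialOrder P] (f : Set P → P) : Set (Set P) :=
  {C | C ∈ Cfam0 f ∧ ∀ C' ∈ Cfam0 f, C \ C' ⊆ U C'}

/-- `C*` is a chain. -/
lemma Cstar_chain {P : Type*} [PartialOrder P] (f : Set P → P) :
    IsChain (· ≤ ·) (⋃₀ Cfam f) := by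
  intro x hx y hy _
  obtain ⟨C, hC, hxC⟩ := hx
  obtain ⟨C', hC', hyC'⟩ := hy
  by_cases hx' : x ∈ C'
  · rcases eq_or_ne x y with rfl | hne
    · exact Or.inl le_rfl
    · exact hC'.1.1 hx' hyC' hne
  · have hxU : x ∈ U C' := hC.2 C' hC'.1 ⟨hxC, hx'⟩
    exact Or.inr (le_of_lt (hxU y hyC'))

/-- `C*` satisfies condition (i). -/
lemma Cstar_i {P : Type*} [PartialOrder P] (f : Set P → P) (S : Set P)
    (hS : S ⊆ ⋃₀ Cfam f) (h : ¬ U S ⊆ U (⋃₀ Cfam f)) :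
    f (U S) ∈ ⋃₀ Cfam f := by
  obtain ⟨z, hzS, hz⟩ := Set.not_subset.mp h
  have hz' : ∃ c ∈ ⋃₀ Cfam f, ¬ c < z := by
    by_contra hcon
    push_neg at hcon
    exact hz fun y hy => hcon y hy
  obtain ⟨c, hc, hcz⟩ := hz'
  obtain ⟨C₀, hC₀, hcC₀⟩ := hc
  have hSC₀ : S ⊆ C₀ := by
    intro s hs
    by_contra hsC₀
    obtain ⟨C', hC', hsC'⟩ := hS hs
    have hsU : s ∈ U C₀ := hC'.2 C₀ hC₀.1 ⟨hsC', hsC₀⟩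
    exact hcz ((hsU c hcC₀).trans (hzS s hs))
  have hnsub : ¬ U S ⊆ U C₀ := fun hsub => hcz (hsub hzS c hcC₀)
  exact ⟨C₀, hC₀, hC₀.1.2 S hSC₀ hnsub⟩

/-- With `u := f (U C*)` and `C** := C* ∪ {u}`, the chain `C**` satisfies
condition (i): for every `S ⊆ C**` with `U S ⊈ U C**`, one has `f (U S) ∈ C**`;
in particular `C** ∈ 𝒞₀`. -/
theorem stmt_10 {P : Type*} [PartialOrder P] [Nonempty P]
    (hub : ∀ C : Set P, IsChain (· ≤ ·) C → ∃ x : P, ∀ y ∈ C, y ≤ x)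
    (hnomax : ∀ m : P, ∃ x : P, m < x)
    (f : Set P → P) (hf : ∀ C : Set P, IsChain (· ≤ ·) C → f (U C) ∈ U C) :
    (∀ S ⊆ ⋃₀ Cfam f ∪ {f (U (⋃₀ Cfam f))},
        ¬ U S ⊆ U (⋃₀ Cfam f ∪ {f (U (⋃₀ Cfam f))}) →
        f (U S) ∈ ⋃₀ Cfam f ∪ {f (U (⋃₀ Cfam f))}) ∧
      ⋃₀ Cfam f ∪ {f (U (⋃₀ Cfam f))} ∈ Cfam0 f := by
  have hchain := Cstar_chain f
  have hu : f (U (⋃₀ Cfam f)) ∈ U (⋃₀ Cfam f) := hf _ hchain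
  set Cs := ⋃₀ Cfam f with hCs
  set u := f (U Cs) with hu_def
  have key : ∀ S ⊆ Cs ∪ {u}, ¬ U S ⊆ U (Cs ∪ {u}) → f (U S) ∈ Cs ∪ {u} := by
    intro S hS hUS
    by_cases hu_mem : u ∈ S
    · exfalso
      apply hUS
      intro x hx y hy
      have hux : u < x := hx _ hu_mem
      rcases hy with hy | hy
      · exact (hu y hy).trans hux
      · rw [Set.mem_singleton_iff] at hy; subst hy; exact hux
    · have hS' : S ⊆ Cs := by
        intro s hs
        rcases hS hs with h | h
        · exact h
        · rw [Set.mem_singleton_iff] at h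
          exact absurd (h ▸ hs) hu_mem
      by_cases hsub : U S ⊆ U Cs
      · have heq : U S = U Cs := by
          apply Set.Subset.antisymm hsub
          intro x hx s hs
          exact hx s (hS' hs)
        right
        rw [Set.mem_singleton_iff, heq]
      · exact Or.inl (Cstar_i f S hS' hsub)
  have hchain2 : IsChain (· ≤ ·) (Cs ∪ {u}) := by
    intro x hx y hy hxy
    rcases hx with hx | hx <;> rcases hy with hy | hy
    · exact hchain hx hy hxy
    · rw [Set.mem_singleton_iff] at hy
      subst hy
      exact Or.inl (le_of_lt (hu x hx))
    · rw [Set.mem_singleton_iff] at hx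
      subst hx
      exact Or.inr (le_of_lt (hu y hy))
    · rw [Set.mem_singleton_iff] at hx hy
      exact absurd (hx.trans hy.symm) hxy
  exact ⟨key, hchain2, key⟩
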